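/- arXiv:2402.08929 — 3 statements merged into one kernel-verified Lean document; each statement's English description precedes it below -/
import Mathlib

section
/- Let A, B be symmetric positive-definite d×d real matrices with A ⪯ B. Then tr((B − A)·B⁻¹) ≤ log(det(B)/det(A)). -/
open Matrix
open scoped MatrixOrder

lemma my_trace_eq_sum_eigenvalues {n : ℕ} {A : Matrix (Fin n) (Fin n) ℝ}
    (hA : A.IsHermitian) : A.trace = ∑ i, hA.eigenvalues i := by
  refine hA.trace_eq_sum_eigenvalues.trans ?_
  simp

lemma my_posDef_conj {n : ℕ} {A : Matrix (Fin n) (Fin n) ℝ} (hA : A.PosDef)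
    {N : Matrix (Fin n) (Fin n) ℝ} (hN : IsUnit N) : (Nᴴ * A * N).PosDef := by
  have h := (Matrix.IsUnit.posDef_star_left_conjugate_iff (x := A) hN).mpr hA
  rwa [star_eq_conjTranspose] at h

/-- Potential-function inequality: for `A ⪯ B` positive definite,
`tr((B − A)·B⁻¹) ≤ log(det B / det A)`. -/
theorem trace_sub_mul_inv_le_log_det_ratio {d : ℕ} (A B : Matrix (Fin d) (Fin d) ℝ)
    (hA : A.PosDef) (hB : B.PosDef) (hAB : (B - A).PosSemidef) :
    ((B - A) * B⁻¹).trace ≤ Real.log (B.det / A.det) := by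
  classical
  have hBpsd := hB.posSemidef
  set S := CFC.sqrt B with hSdef
  have hSS : S * S = B := CFC.sqrt_mul_sqrt_self B hBpsd.nonneg
  have hSdet : S.det ≠ 0 := by
    intro h
    have : B.det = 0 := by rw [← hSS, det_mul, h, mul_zero]
    exact hB.det_pos.ne' this
  have hSunit : IsUnit S := (isUnit_iff_isUnit_det _).2 hSdet.isUnit
  have hSinvH : S⁻¹ᴴ = S⁻¹ := ((CFC.sqrt_nonneg B).posSemidef.1.inv).eq
  set M := S⁻¹ * A * S⁻¹ with hMdef
  have hMpd : M.PosDef := by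
    have h := my_posDef_conj hA (Matrix.isUnit_nonsing_inv_iff.mpr hSunit)
    rwa [hSinvH] at h
  set lam := hMpd.1.eigenvalues with hlam
  have h1 : S⁻¹ * B * S⁻¹ = 1 := by
    rw [← hSS, ← mul_assoc, Matrix.nonsing_inv_mul _ hSdet.isUnit, one_mul,
      Matrix.mul_nonsing_inv _ hSdet.isUnit]
  have hBinv : B⁻¹ = S⁻¹ * S⁻¹ := by rw [← hSS, Matrix.mul_inv_rev]
  have hdetSinv : S⁻¹.det * S⁻¹.det = (B.det)⁻¹ := by
    rw [← det_mul, ← hBinv, Matrix.det_nonsing_inv, Ring.inverse_eq_inv]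
  have hdetM : M.det = A.det / B.det := by
    rw [hMdef, det_mul, det_mul, div_eq_mul_inv, ← hdetSinv]
    ring
  have hlampos : ∀ i, 0 < lam i := fun i => hMpd.eigenvalues_pos i
  calc ((B - A) * B⁻¹).trace
      = (1 - M).trace := by
        rw [hBinv, ← mul_assoc, trace_mul_cycle, mul_sub, sub_mul, h1]
    _ = ∑ i, (1 - lam i) := by
        rw [trace_sub, trace_one, my_trace_eq_sum_eigenvalues hMpd.1,
          Finset.sum_sub_distrib, Finset.sum_const]
        simp
        rfl
    _ ≤ ∑ i, (- Real.log (lam i)) := by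
        refine Finset.sum_le_sum fun i _ => ?_
        have := Real.log_le_sub_one_of_pos (hlampos i)
        linarith
    _ = - Real.log M.det := by
        rw [hMpd.1.det_eq_prod_eigenvalues]
        simp only [RCLike.ofReal_real_eq_id, id_eq]
        rw [Real.log_prod fun i _ => (hlampos i).ne', Finset.sum_neg_distrib]
    _ = Real.log (B.det / A.det) := by
        rw [hdetM, Real.log_div hA.det_pos.ne' hB.det_pos.ne',
          Real.log_div hB.det_pos.ne' hA.det_pos.ne']
        ring
end

section
/- Fix T ≥ 1 and define ρ(t) = t − max{2^i : i ≥ 0, 2^i divides t} for t ∈ {1,...,T}. Define cut(t) = {s ∈ [T] : ρ(s) < t ≤ s}. Then the width w(ρ) = max_{t∈[T]} |cut(t)| satisfies w(ρ) ≤ ⌊log₂ T⌋ + 1. -/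
/-- `ρ(t) = t − max{2^i : 2^i divides t}`; the maximal power of 2 dividing `t` is
`2 ^ (t.factorization 2)`. -/
def rho (t : ℕ) : ℕ := t - 2 ^ (t.factorization 2)

/-- `cut(t) = {s ∈ [T] : ρ(s) < t ≤ s}`. -/
def cut (T t : ℕ) : Finset ℕ :=
  (Finset.Icc 1 T).filter (fun s => rho s < t ∧ t ≤ s)

/-- The width of the multi-scaled random walk is at most `⌊log₂ T⌋ + 1`. -/
theorem width_le_log (T : ℕ) (hT : 1 ≤ T) :
    ∀ t ∈ Finset.Icc 1 T, (cut T t).card ≤ Nat.log 2 T + 1 := by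
  intro t _ht
  have key : ∀ s ∈ cut T t, s.factorization 2 ∈ Finset.range (Nat.log 2 T + 1) := by
    intro s hs
    simp only [cut, Finset.mem_filter, Finset.mem_Icc] at hs
    obtain ⟨⟨hs1, hsT⟩, _, _⟩ := hs
    have hdvd : 2 ^ (s.factorization 2) ∣ s := Nat.ordProj_dvd s 2
    have hle : 2 ^ (s.factorization 2) ≤ T :=
      le_trans (Nat.le_of_dvd (by omega) hdvd) hsT
    have := Nat.pow_log_le_self 2 (show T ≠ 0 by omega)
    simp only [Finset.mem_range]
    have : s.factorization 2 ≤ Nat.log 2 T :=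
      (Nat.le_log_iff_pow_le (by norm_num) (by omega)).mpr hle
    omega
  have hinj : ∀ s₁ ∈ cut T t, ∀ s₂ ∈ cut T t,
      s₁.factorization 2 = s₂.factorization 2 → s₁ = s₂ := by
    intro s₁ h₁ s₂ h₂ hv
    simp only [cut, Finset.mem_filter, Finset.mem_Icc] at h₁ h₂
    simp only [rho] at h₁ h₂
    obtain ⟨⟨a1, b1⟩, c1, d1⟩ := h₁
    obtain ⟨⟨a2, b2⟩, c2, d2⟩ := h₂
    have hd1 : 2 ^ (s₁.factorization 2) ∣ s₁ := Nat.ordProj_dvd s₁ 2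
    have hd2 : 2 ^ (s₂.factorization 2) ∣ s₂ := Nat.ordProj_dvd s₂ 2
    rw [hv] at hd1
    set p := 2 ^ (s₂.factorization 2) with hp
    have hp1 : p ≤ s₁ := Nat.le_of_dvd (by omega) hd1
    have hp2 : p ≤ s₂ := Nat.le_of_dvd (by omega) hd2
    rw [hv] at c1
    -- s₁, s₂ ∈ [t, t + p), both multiples of p
    rcases le_total s₁ s₂ with h | h
    · have hdvd : p ∣ s₂ - s₁ := Nat.dvd_sub hd2 hd1
      have hlt : s₂ - s₁ < p := by omega
      have := Nat.eq_zero_of_dvd_of_lt hdvd hlt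
      omega
    · have hdvd : p ∣ s₁ - s₂ := Nat.dvd_sub hd1 hd2
      have hlt : s₁ - s₂ < p := by omega
      have := Nat.eq_zero_of_dvd_of_lt hdvd hlt
      omega
  calc (cut T t).card ≤ (Finset.range (Nat.log 2 T + 1)).card :=
        Finset.card_le_card_of_injOn _ key hinj
    _ = Nat.log 2 T + 1 := Finset.card_range _
end

section
/- Let ξ₁,...,ξ_T be i.i.d. N(0,σ²) random variables and define the multi-scaled random walk n̄_t = n̄_{ρ(t)} + ξ_t with ρ(t) = t − max{2^i : 2^i divides t} and n̄₀ = 0. Suppose the depth satisfies |ρ*(t)| + 1 ≤ log(T/γ) for all t (which holds when the depth is at most ⌊log₂T⌋+1 and T/γ is large enough). Then for every γ ∈ (0,1), P(max_{1≤t≤T} |n̄_t| > 2σ·log(T/γ)) ≤ γ. -/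
open MeasureTheory ProbabilityTheory
open scoped NNReal ENNReal

lemma rho_lt {t : ℕ} (ht : 1 ≤ t) : rho t < t :=
  Nat.sub_lt ht (by positivity)

/-- The ancestor set `ρ*(t)`. -/
def ancestors : ℕ → Finset ℕ
  | t =>
    if h : 2 ≤ t then insert (rho t) (ancestors (rho t)) else ∅
  termination_by t => t
  decreasing_by exact rho_lt (le_trans one_le_two h)

/-- The multi-scaled random walk `n̄_t = n̄_{ρ(t)} + ξ_t`, `n̄_0 = 0`. -/
def nbar {Ω : Type*} (ξ : ℕ → Ω → ℝ) : ℕ → Ω → ℝ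
  | t =>
    if h : 1 ≤ t then fun ω => nbar ξ (rho t) ω + ξ t ω else fun _ => 0
  termination_by t => t
  decreasing_by exact rho_lt h

/- ### Auxiliary lemmas -/

lemma ancestors_lt : ∀ t, ∀ s ∈ ancestors t, s < t := by
  intro t
  induction t using Nat.strong_induction_on with
  | _ t ih =>
    rw [ancestors]
    split_ifs with h
    · intro s hs
      rcases Finset.mem_insert.mp hs with rfl | hs
      · exact rho_lt (le_trans one_le_two h)
      · exact lt_trans (ih _ (rho_lt (le_trans one_le_two h)) s hs) (rho_lt (le_trans one_le_two h))
    · simp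

/-- the chain `ρ*(t) ∪ {t}` with the root `0` removed. -/
def chain (t : ℕ) : Finset ℕ := (insert t (ancestors t)).erase 0

lemma chain_zero : chain 0 = ∅ := by
  rw [chain, ancestors]; norm_num

lemma mem_chain_le {s t : ℕ} (h : s ∈ chain t) : s ≤ t := by
  rcases Finset.mem_insert.mp (Finset.mem_of_mem_erase h) with rfl | h
  · exact le_refl _
  · exact le_of_lt (ancestors_lt t s h)

lemma card_chain_le (t : ℕ) : (chain t).card ≤ (ancestors t).card + 1 :=
  le_trans (Finset.card_erase_le) (Finset.card_insert_le _ _)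

lemma mem_chain_self {t : ℕ} (ht : 1 ≤ t) : t ∈ chain t :=
  Finset.mem_erase.mpr ⟨Nat.one_le_iff_ne_zero.mp ht, Finset.mem_insert_self _ _⟩

lemma chain_eq {t : ℕ} (ht : 1 ≤ t) : chain t = insert t (chain (rho t)) := by
  rcases eq_or_lt_of_le ht with rfl | h2
  · rw [chain, chain, ancestors, ancestors]
    norm_num
    have : rho 1 = 0 := by norm_num [rho]
    rw [this, ancestors]
    norm_num [Finset.erase_insert_of_ne (one_ne_zero)]
  · have h2 : 2 ≤ t := h2
    rw [chain, chain]
    conv_lhs => rw [ancestors]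
    rw [dif_pos h2]
    rw [Finset.erase_insert_of_ne (by omega : t ≠ 0)]

lemma nbar_eq_sum {Ω : Type*} (ξ : ℕ → Ω → ℝ) : ∀ t, ∀ ω, nbar ξ t ω = ∑ s ∈ chain t, ξ s ω := by
  intro t
  induction t using Nat.strong_induction_on with
  | _ t ih =>
    intro ω
    rcases Nat.lt_or_ge t 1 with h | h
    · interval_cases t
      rw [nbar, chain_zero]; norm_num
    · rw [nbar, dif_pos h, chain_eq h, Finset.sum_insert, ih _ (rho_lt h) ω, add_comm]
      intro hmem
      exact absurd (mem_chain_le hmem) (not_le.mpr (rho_lt h))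

lemma exp_mul_gaussianPDFReal (v : ℝ≥0) (hv : v ≠ 0) (u x : ℝ) :
    Real.exp (u * x) * gaussianPDFReal 0 v x
      = Real.exp (u ^ 2 * v / 2) * gaussianPDFReal (u * v) v x := by
  rw [gaussianPDFReal, gaussianPDFReal]
  have hv' : (0:ℝ) < v := lt_of_le_of_ne v.coe_nonneg (by exact_mod_cast (Ne.symm hv))
  rw [mul_left_comm, mul_left_comm (Real.exp (u ^ 2 * v / 2)), ← Real.exp_add, ← Real.exp_add]
  congr 1
  field_simp
  ring

lemma integral_exp_gaussianReal (v : ℝ≥0) (u : ℝ) :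
    ∫ x, Real.exp (u * x) ∂(gaussianReal 0 v) = Real.exp (u ^ 2 * v / 2) := by
  rcases eq_or_ne v 0 with rfl | hv
  · simp [gaussianReal_zero_var, integral_dirac]
  · rw [gaussianReal_of_var_ne_zero _ hv]
    have hpdf : gaussianPDF 0 v = fun x => ((gaussianPDFReal 0 v x).toNNReal : ℝ≥0∞) := rfl
    rw [hpdf, integral_withDensity_eq_integral_smul
      ((measurable_gaussianPDFReal 0 v).real_toNNReal)]
    have : ∀ x, (gaussianPDFReal 0 v x).toNNReal • Real.exp (u * x)
        = Real.exp (u ^ 2 * v / 2) * gaussianPDFReal (u * v) v x := by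
      intro x
      rw [NNReal.smul_def, smul_eq_mul, Real.coe_toNNReal _ (gaussianPDFReal_nonneg _ _ _),
        mul_comm, exp_mul_gaussianPDFReal v hv]
    simp_rw [this]
    rw [integral_const_mul, integral_gaussianPDFReal_eq_one _ hv, mul_one]

lemma integrable_exp_gaussianReal (v : ℝ≥0) (u : ℝ) :
    Integrable (fun x => Real.exp (u * x)) (gaussianReal 0 v) := by
  rcases eq_or_ne v 0 with rfl | hv
  · rw [gaussianReal_zero_var]
    exact Integrable.congr (integrable_const (Real.exp (u * 0)))
      (ae_eq_dirac (fun x => Real.exp (u * x))).symm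
  · rw [gaussianReal_of_var_ne_zero _ hv]
    have hpdf : gaussianPDF 0 v = fun x => ((gaussianPDFReal 0 v x).toNNReal : ℝ≥0∞) := rfl
    rw [hpdf, integrable_withDensity_iff_integrable_smul
      ((measurable_gaussianPDFReal 0 v).real_toNNReal)]
    have : ∀ x, (gaussianPDFReal 0 v x).toNNReal • Real.exp (u * x)
        = Real.exp (u ^ 2 * v / 2) * gaussianPDFReal (u * v) v x := by
      intro x
      rw [NNReal.smul_def, smul_eq_mul, Real.coe_toNNReal _ (gaussianPDFReal_nonneg _ _ _),
        mul_comm, exp_mul_gaussianPDFReal v hv]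
    simp_rw [this]
    exact (integrable_gaussianPDFReal _ _).const_mul _

lemma mgf_of_gaussian {Ω : Type*} [MeasurableSpace Ω] {μ : Measure Ω} {X : Ω → ℝ}
    (hX : Measurable X) (v : ℝ≥0) (h : μ.map X = gaussianReal 0 v) (u : ℝ) :
    mgf X μ u = Real.exp (u ^ 2 * v / 2) := by
  have hm : AEStronglyMeasurable (fun x => Real.exp (u * x)) (μ.map X) :=
    (measurable_const.mul measurable_id).exp.aestronglyMeasurable
  have := integral_map (φ := X) (f := fun x => Real.exp (u * x)) hX.aemeasurable hm
  rw [h, integral_exp_gaussianReal] at this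
  simpa [mgf] using this.symm

lemma integrable_exp_of_gaussian {Ω : Type*} [MeasurableSpace Ω] {μ : Measure Ω} {X : Ω → ℝ}
    (hX : Measurable X) (v : ℝ≥0) (h : μ.map X = gaussianReal 0 v) (u : ℝ) :
    Integrable (fun ω => Real.exp (u * X ω)) μ := by
  have := integrable_exp_gaussianReal v u
  rw [← h] at this
  exact (integrable_map_measure (measurable_const.mul measurable_id).exp.aestronglyMeasurable
    hX.aemeasurable).mp this

/-- Tail bound on the multi-scaled random walk built from i.i.d. `N(0,σ²)` increments:
with probability at least `1 − γ`, all `|n̄_t|`, `t ∈ [T]`, are at most `2σ log(T/γ)`. -/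
theorem mrw_tail_bound {Ω : Type*} [MeasurableSpace Ω] (μ : Measure Ω)
    [IsProbabilityMeasure μ] (σ : ℝ≥0) (T : ℕ) (hT : 1 ≤ T) (γ : ℝ) (hγ : γ ∈ Set.Ioo (0:ℝ) 1)
    (ξ : ℕ → Ω → ℝ) (hmeas : ∀ t, Measurable (ξ t))
    (hindep : iIndepFun ξ μ)
    (hdist : ∀ t, μ.map (ξ t) = gaussianReal 0 (σ ^ 2))
    (hdepth : ∀ t ∈ Finset.Icc 1 T, ((ancestors t).card : ℝ) + 1 ≤ Real.log (T / γ)) :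
    μ {ω | ∃ t ∈ Finset.Icc 1 T, |nbar ξ t ω| > 2 * (σ : ℝ) * Real.log (T / γ)}
      ≤ ENNReal.ofReal γ := by
  obtain ⟨hγ0, hγ1⟩ := hγ
  set L := Real.log ((T:ℝ) / γ) with hLdef
  have hTpos : (0:ℝ) < T := by exact_mod_cast hT
  have hTγ : (0:ℝ) < (T:ℝ) / γ := div_pos hTpos hγ0
  have hanc1 : ancestors 1 = ∅ := by rw [ancestors]; norm_num
  have hL1 : (1:ℝ) ≤ L := by
    have := hdepth 1 (Finset.mem_Icc.mpr ⟨le_refl _, hT⟩)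
    simpa [hanc1] using this
  have hexpL : Real.exp (-L) = γ / T := by
    rw [Real.exp_neg, Real.exp_log hTγ, inv_div]
  set c := 2 * (σ : ℝ) * L with hcdef
  -- the case of zero variance
  rcases eq_or_ne σ 0 with rfl | hσ
  · have hz : ∀ᵐ ω ∂μ, ∀ s, ξ s ω = 0 := by
      rw [ae_all_iff]
      intro s
      have h0 : μ (ξ s ⁻¹' ({0}ᶜ)) = 0 := by
        rw [← Measure.map_apply (hmeas s) (measurableSet_singleton (0:ℝ)).compl, hdist s]
        have h00 : ((0:ℝ≥0) ^ 2) = 0 := by norm_num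
        rw [h00, gaussianReal_zero_var]
        simp
      rw [ae_iff]
      convert h0 using 2
      rfl
    have hnull : μ {ω | ¬ ∀ s, ξ s ω = 0} = 0 := by rw [ae_iff] at hz; exact hz
    refine le_trans (le_of_eq (measure_mono_null ?_ hnull)) zero_le
    intro ω hω hall
    obtain ⟨t, _, habs⟩ := hω
    rw [nbar_eq_sum] at habs
    have : ∑ s ∈ chain t, ξ s ω = 0 := Finset.sum_eq_zero fun s _ => hall s
    rw [this] at habs
    rw [hcdef] at habs
    norm_num at habs
  -- main case: positive variance
  have hσpos : (0:ℝ) < σ := lt_of_le_of_ne σ.coe_nonneg (by exact_mod_cast (Ne.symm hσ))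
  set B := γ / T * Real.exp (-1) with hBdef
  have hBnn : 0 ≤ B := by positivity
  have key : ∀ t ∈ Finset.Icc 1 T,
      μ {ω | |nbar ξ t ω| > c} ≤ ENNReal.ofReal (B + B) := by
    intro t ht
    obtain ⟨ht1, htT⟩ := Finset.mem_Icc.mp ht
    set X : Ω → ℝ := ∑ s ∈ chain t, ξ s with hXdef
    have hXapp : ∀ ω, X ω = ∑ s ∈ chain t, ξ s ω := fun ω => by
      rw [hXdef]; exact Finset.sum_apply ω (chain t) ξ
    set k := (chain t).card with hkdef
    have hk1 : 1 ≤ k := Finset.card_pos.mpr ⟨t, mem_chain_self ht1⟩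
    have hkpos : (0:ℝ) < k := by exact_mod_cast hk1
    have hkL : (k:ℝ) ≤ L := by
      refine le_trans ?_ (hdepth t ht)
      exact_mod_cast card_chain_le t
    set u := 2 * L / (k * σ) with hudef
    have hupos : 0 < u := by positivity
    have hint : ∀ w : ℝ, Integrable (fun ω => Real.exp (w * X ω)) μ := by
      intro w
      exact hindep.integrable_exp_mul_sum hmeas
        (fun s _ => integrable_exp_of_gaussian (hmeas s) _ (hdist s) w)
    have hmgf : ∀ w : ℝ, mgf X μ w = Real.exp ((k:ℝ) * (w ^ 2 * ((σ:ℝ))^2 / 2)) := by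
      intro w
      rw [hXdef, hindep.mgf_sum hmeas]
      have : ∀ s ∈ chain t, mgf (ξ s) μ w = Real.exp (w ^ 2 * ((σ:ℝ))^2 / 2) := by
        intro s _
        rw [mgf_of_gaussian (hmeas s) _ (hdist s) w]
        norm_num
      rw [Finset.prod_congr rfl this, Finset.prod_const, ← Real.exp_nat_mul]
    have hval : Real.exp (-u * c) * Real.exp ((k:ℝ) * (u ^ 2 * ((σ:ℝ))^2 / 2)) ≤ B := by
      rw [← Real.exp_add]
      have heq : -u * c + (k:ℝ) * (u ^ 2 * ((σ:ℝ))^2 / 2) = -(2 * L ^ 2 / k) := by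
        rw [hudef, hcdef]
        field_simp
        ring
      rw [heq]
      have hle : L + 1 ≤ 2 * L ^ 2 / k := by
        rw [le_div_iff₀ hkpos]
        nlinarith
      calc Real.exp (-(2 * L ^ 2 / k)) ≤ Real.exp (-(L + 1)) := by
            apply Real.exp_le_exp.mpr; linarith
        _ = B := by rw [hBdef, ← hexpL, ← Real.exp_add]; ring_nf
    have hupper : μ {ω | c ≤ X ω} ≤ ENNReal.ofReal B := by
      rw [ENNReal.le_ofReal_iff_toReal_le (measure_ne_top _ _) hBnn]
      calc (μ {ω | c ≤ X ω}).toReal ≤ Real.exp (-u * c) * mgf X μ u :=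
            measure_ge_le_exp_mul_mgf c hupos.le (hint u)
        _ ≤ B := by rw [hmgf u]; exact hval
    have hlower : μ {ω | X ω ≤ -c} ≤ ENNReal.ofReal B := by
      rw [ENNReal.le_ofReal_iff_toReal_le (measure_ne_top _ _) hBnn]
      calc (μ {ω | X ω ≤ -c}).toReal ≤ Real.exp (-(-u) * (-c)) * mgf X μ (-u) :=
            measure_le_le_exp_mul_mgf (-c) (by linarith) (hint (-u))
        _ ≤ B := by
            rw [hmgf (-u)]
            have : -(-u) * (-c) = -u * c := by ring
            rw [this]
            have : (-u) ^ 2 = u ^ 2 := by ring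
            rw [this]
            exact hval
    have hsub : {ω | |nbar ξ t ω| > c} ⊆ {ω | c ≤ X ω} ∪ {ω | X ω ≤ -c} := by
      intro ω hω
      simp only [Set.mem_setOf_eq, Set.mem_union] at *
      rw [nbar_eq_sum, ← hXapp] at hω
      rcases le_or_gt c (X ω) with h1 | h1
      · exact Or.inl h1
      · right
        rcases lt_abs.mp hω with h2 | h2
        · linarith
        · linarith
    calc μ {ω | |nbar ξ t ω| > c} ≤ μ ({ω | c ≤ X ω} ∪ {ω | X ω ≤ -c}) := measure_mono hsub
      _ ≤ μ {ω | c ≤ X ω} + μ {ω | X ω ≤ -c} := measure_union_le _ _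
      _ ≤ ENNReal.ofReal B + ENNReal.ofReal B := add_le_add hupper hlower
      _ = ENNReal.ofReal (B + B) := (ENNReal.ofReal_add hBnn hBnn).symm
  -- union bound
  have hsub : {ω | ∃ t ∈ Finset.Icc 1 T, |nbar ξ t ω| > c}
      ⊆ ⋃ t ∈ Finset.Icc 1 T, {ω | |nbar ξ t ω| > c} := by
    intro ω hω
    obtain ⟨t, ht, h⟩ := hω
    exact Set.mem_biUnion ht h
  calc μ {ω | ∃ t ∈ Finset.Icc 1 T, |nbar ξ t ω| > c}
      ≤ μ (⋃ t ∈ Finset.Icc 1 T, {ω | |nbar ξ t ω| > c}) := measure_mono hsub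
    _ ≤ ∑ t ∈ Finset.Icc 1 T, μ {ω | |nbar ξ t ω| > c} := measure_biUnion_finset_le _ _
    _ ≤ ∑ _t ∈ Finset.Icc 1 T, ENNReal.ofReal (B + B) := Finset.sum_le_sum key
    _ = (T : ℕ) • ENNReal.ofReal (B + B) := by
        rw [Finset.sum_const, Nat.card_Icc]
        norm_num
    _ = ENNReal.ofReal ((T:ℝ) * (B + B)) := by
        rw [nsmul_eq_mul, ← ENNReal.ofReal_natCast, ← ENNReal.ofReal_mul (by positivity)]
    _ ≤ ENNReal.ofReal γ := by
        apply ENNReal.ofReal_le_ofReal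
        have hTB : (T:ℝ) * (B + B) = 2 * γ * Real.exp (-1) := by
          rw [hBdef]; field_simp; ring
        rw [hTB]
        have h2e : 2 * Real.exp (-1) ≤ 1 := by
          have h1 : (2:ℝ) ≤ Real.exp 1 := by
            have := Real.add_one_le_exp 1
            linarith
          have h2 : Real.exp (-1) * Real.exp 1 = 1 := by
            rw [← Real.exp_add]; norm_num
          nlinarith [Real.exp_pos (-1)]
        nlinarith
end
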